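/- Let W_n = [0,1]^n and let θ : int(W_n) → ℝ be continuously differentiable. Let w* be a point of the probability simplex S_n = {w ∈ ℝⁿ : Σ_i w_i = 1, w_i ≥ 0} that is a locally optimal solution of the problem: minimize Σ_{i=1}^n w_i log(n w_i) over w ∈ S_n subject to θ(w) = c. Assume there is no constant r ∈ ℝ with ∇θ(w*) = r·(1,…,1). Then there exists λ ∈ ℝ such that w*_i is proportional to e^{λ ∂_i θ(w*)} for all i ∈ {1,…,n}, i.e. there is a constant C > 0 with w*_i = C e^{λ ∂_i θ(w*)} for all i. -/

import Mathlib

open MeasureTheory Real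

set_option maxHeartbeats 1000000 in
/-- first-order necessary conditions for the entropy-minimization problem:
if `w*` in the probability simplex is a local minimum of `∑ᵢ wᵢ log(n wᵢ)` subject to
`θ(w) = c`, `θ` continuously differentiable on the interior of the unit cube with gradient `θ'`,
and `∇θ(w*)` is not a multiple of `(1,…,1)`, then there are `λ ∈ ℝ` and `C > 0` with
`w*ᵢ = C e^{λ ∂ᵢθ(w*)}` for all `i`. -/
theorem entropy_local_min_necessary_conditions (n : ℕ) (c : ℝ)
    (θ : (Fin n → ℝ) → ℝ) (θ' : (Fin n → ℝ) → (Fin n → ℝ))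
    (hdiff : ∀ w ∈ interior (Set.pi Set.univ fun _ : Fin n => Set.Icc (0 : ℝ) 1),
      HasFDerivAt θ (∑ i, θ' w i • (ContinuousLinearMap.proj i : (Fin n → ℝ) →L[ℝ] ℝ)) w)
    (hcont : ContinuousOn θ' (interior (Set.pi Set.univ fun _ : Fin n => Set.Icc (0 : ℝ) 1)))
    (wstar : Fin n → ℝ)
    (hwmem : wstar ∈ interior (Set.pi Set.univ fun _ : Fin n => Set.Icc (0 : ℝ) 1))
    (hwsum : ∑ i, wstar i = 1) (hwpos : ∀ i, 0 ≤ wstar i)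
    (hwc : θ wstar = c)
    (hlocal : ∃ ε > (0 : ℝ), ∀ w : Fin n → ℝ, (∑ i, w i) = 1 → (∀ i, 0 ≤ w i) →
      θ w = c → ‖w - wstar‖ < ε →
      ∑ i, wstar i * Real.log (n * wstar i) ≤ ∑ i, w i * Real.log (n * w i))
    (hnonconst : ¬ ∃ r : ℝ, θ' wstar = fun _ => r) :
    ∃ (l C : ℝ), 0 < C ∧ ∀ i, wstar i = C * Real.exp (l * θ' wstar i) := by
  classical
  -- n must be positive
  rcases Nat.eq_zero_or_pos n with hn0 | hn
  · subst hn0; simp at hwsum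
  set U : Set (Fin n → ℝ) :=
    interior (Set.pi Set.univ fun _ : Fin n => Set.Icc (0 : ℝ) 1) with hU
  have hUopen : IsOpen U := isOpen_interior
  have hUIoo : U = Set.pi Set.univ fun _ : Fin n => Set.Ioo (0 : ℝ) 1 := by
    rw [hU, interior_pi_set Set.finite_univ]
    simp [interior_Icc]
  have hmemIoo : ∀ x ∈ U, ∀ i, 0 < x i ∧ x i < 1 := by
    intro x hx i
    rw [hUIoo] at hx
    exact ⟨(hx i (Set.mem_univ i)).1, (hx i (Set.mem_univ i)).2⟩
  have hwpos' : ∀ i, 0 < wstar i := fun i => (hmemIoo wstar hwmem i).1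
  have hnw : ∀ i, 0 < (n : ℝ) * wstar i := fun i =>
    mul_pos (by exact_mod_cast hn) (hwpos' i)
  -- the derivative of θ at wstar is strict
  let E := (Fin n → ℝ)
  set F' : E → (E →L[ℝ] ℝ) :=
    fun w => ∑ i, θ' w i • (ContinuousLinearMap.proj i : E →L[ℝ] ℝ) with hF'
  have hθ'at : ContinuousAt θ' wstar := hcont.continuousAt (hUopen.mem_nhds hwmem)
  have hF'cont : ContinuousAt F' wstar := by
    have : Filter.Tendsto (fun w => ∑ i, θ' w i • (ContinuousLinearMap.proj i : E →L[ℝ] ℝ))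
        (nhds wstar) (nhds (∑ i, θ' wstar i • (ContinuousLinearMap.proj i : E →L[ℝ] ℝ))) := by
      refine tendsto_finset_sum _ fun i _ => ?_
      exact (((continuous_apply i).continuousAt).comp hθ'at).smul tendsto_const_nhds
    exact this
  have hθstrict : HasStrictFDerivAt θ (F' wstar) wstar := by
    refine hasStrictFDerivAt_of_hasFDerivAt_of_continuousAt ?_ hF'cont
    filter_upwards [hUopen.mem_nhds hwmem] with y hy using hdiff y hy
  -- strict derivative of the sum constraint
  set L : E →L[ℝ] ℝ := ∑ i, (ContinuousLinearMap.proj i : E →L[ℝ] ℝ) with hL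
  have hLfun : (fun w : E => ∑ i, w i) = ⇑L := by
    funext w
    rw [hL, ContinuousLinearMap.coe_sum', Finset.sum_apply]
    exact Finset.sum_congr rfl fun i _ => rfl
  have hLstrict : HasStrictFDerivAt (fun w : E => ∑ i, w i) L wstar := by
    rw [hLfun]; exact L.hasStrictFDerivAt
  -- strict derivative of the objective
  have hgstrict : ∀ i, HasStrictDerivAt (fun x : ℝ => x * Real.log (n * x))
      (Real.log (n * wstar i) + 1) (wstar i) := by
    intro i
    have hne : wstar i ≠ 0 := ne_of_gt (hwpos' i)
    have hnne : (n : ℝ) ≠ 0 := by positivity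
    have hinner : HasStrictDerivAt (fun x : ℝ => (n : ℝ) * x) (n : ℝ) (wstar i) := by
      simpa using (hasStrictDerivAt_id (wstar i)).const_mul (n : ℝ)
    have h1 : HasStrictDerivAt (fun x : ℝ => Real.log ((n : ℝ) * x))
        (((n : ℝ) * wstar i)⁻¹ * n) (wstar i) :=
      (Real.hasStrictDerivAt_log (ne_of_gt (hnw i))).comp (wstar i) hinner
    have h2 := (hasStrictDerivAt_id (wstar i)).mul h1
    refine h2.congr_deriv ?_
    rw [show id (wstar i) * (((n : ℝ) * wstar i)⁻¹ * (n : ℝ)) = 1 by simp only [id]; field_simp]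
    ring
  set φ' : E →L[ℝ] ℝ :=
    ∑ i, (Real.log (n * wstar i) + 1) • (ContinuousLinearMap.proj i : E →L[ℝ] ℝ) with hφ'def
  have hφstrict : HasStrictFDerivAt (fun w : E => ∑ i, w i * Real.log (n * w i)) φ' wstar := by
    rw [hφ'def]
    refine HasStrictFDerivAt.fun_sum fun i _ => ?_
    have hp : HasStrictFDerivAt (fun w : Fin n → ℝ => w i)
        (ContinuousLinearMap.proj i : (Fin n → ℝ) →L[ℝ] ℝ) wstar :=
      (ContinuousLinearMap.proj i : (Fin n → ℝ) →L[ℝ] ℝ).hasStrictFDerivAt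
    exact (hgstrict i).comp_hasStrictFDerivAt wstar hp
  -- the constraint family
  set f : Fin 2 → E → ℝ := ![fun w => ∑ i, w i, θ] with hf
  set f' : Fin 2 → (E →L[ℝ] ℝ) := ![L, F' wstar] with hf'
  have hfderiv : ∀ j : Fin 2, HasStrictFDerivAt (f j) (f' j) wstar := by
    intro j
    fin_cases j
    · simpa [hf, hf'] using hLstrict
    · simpa [hf, hf'] using hθstrict
  -- local extremum on the constraint set
  have hextr : IsLocalExtrOn (fun w : E => ∑ i, w i * Real.log (n * w i))
      {x | ∀ j : Fin 2, f j x = f j wstar} wstar := by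
    left
    obtain ⟨ε, hε, hloc⟩ := hlocal
    obtain ⟨r, hr, hball⟩ := Metric.isOpen_iff.1 hUopen wstar hwmem
    refine Metric.mem_nhdsWithin_iff.2 ⟨min ε r, lt_min hε hr, ?_⟩
    rintro x ⟨hxball, hxs⟩
    have hx1 : (∑ i, x i) = 1 := by
      have := hxs 0; simpa [hf, hwsum] using this
    have hx2 : θ x = c := by
      have := hxs 1; simpa [hf, hwc] using this
    have hxU : x ∈ U := hball (Metric.mem_ball.2 (lt_of_lt_of_le hxball (min_le_right _ _)))
    have hxnn : ∀ i, 0 ≤ x i := fun i => le_of_lt (hmemIoo x hxU i).1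
    have hxnorm : ‖x - wstar‖ < ε := by
      rw [← dist_eq_norm]
      exact lt_of_lt_of_le hxball (min_le_left _ _)
    exact hloc x hx1 hxnn hx2 hxnorm
  -- Lagrange multipliers
  obtain ⟨Λ, Λ₀, h0, hsum⟩ :=
    hextr.exists_multipliers_of_hasStrictFDerivAt hfderiv hφstrict
  -- evaluate at standard basis vectors
  have key : ∀ j : Fin n,
      Λ 0 + Λ 1 * θ' wstar j + Λ₀ * (Real.log (n * wstar j) + 1) = 0 := by
    intro j
    have hproj : ∀ (v : Fin n → ℝ) (k : Fin n),
        (ContinuousLinearMap.proj k : (Fin n → ℝ) →L[ℝ] ℝ) v = v k := fun _ _ => rfl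
    have hLval : L (Pi.single j 1) = 1 := by
      simp [hL, hproj, Pi.single_apply, Finset.sum_ite_eq' Finset.univ j]
    have hFval : (F' wstar) (Pi.single j 1) = θ' wstar j := by
      simp [hF', hproj, Pi.single_apply, mul_ite, Finset.sum_ite_eq' Finset.univ j]
    have hφval : φ' (Pi.single j 1) = Real.log (n * wstar j) + 1 := by
      simp [hφ'def, hproj, Pi.single_apply, mul_ite, Finset.sum_ite_eq' Finset.univ j]
    have hexp : (∑ i : Fin 2, Λ i • f' i) (Pi.single j 1) + Λ₀ • φ' (Pi.single j 1) = 0 := by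
      rw [← ContinuousLinearMap.smul_apply, ← ContinuousLinearMap.add_apply, hsum]; simp
    rw [Fin.sum_univ_two] at hexp
    simp only [hf', Matrix.cons_val_zero, Matrix.cons_val_one, Matrix.head_cons,
      ContinuousLinearMap.add_apply, ContinuousLinearMap.coe_smul', Pi.smul_apply,
      smul_eq_mul, hLval, hFval, hφval] at hexp
    linarith [hexp]
  -- Λ₀ ≠ 0
  have hΛ₀ : Λ₀ ≠ 0 := by
    intro hz
    rcases eq_or_ne (Λ 1) 0 with h1 | h1
    · have h0' : Λ 0 = 0 := by
        have := key ⟨0, hn⟩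
        rw [hz, h1] at this; linarith
      apply h0
      have : Λ = 0 := by
        funext j; fin_cases j <;> simpa [h0', h1]
      simp [this, hz]
    · apply hnonconst
      refine ⟨-Λ 0 / Λ 1, ?_⟩
      funext j
      have := key j
      rw [hz] at this
      field_simp
      linarith
  -- solve for wstar
  refine ⟨-Λ 1 / Λ₀, Real.exp (-1 - Λ 0 / Λ₀) / n, by positivity, fun j => ?_⟩
  have hlog : Real.log ((n : ℝ) * wstar j) =
      -1 - Λ 0 / Λ₀ + (-Λ 1 / Λ₀) * θ' wstar j := by
    have := key j
    field_simp
    ring_nf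
    ring_nf at this
    nlinarith [this]
  have := Real.exp_log (hnw j)
  rw [hlog, Real.exp_add] at this
  have hnne : (n : ℝ) ≠ 0 := by positivity
  rw [div_mul_eq_mul_div, this, mul_comm, mul_div_assoc, div_self hnne, mul_one]
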